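/- Let P be a binary path of length n starting with a downstep and let (i,j) be a cell of its shifted diagram F(P). The corresponding lattice point (n+i−j, n−i−j) is a valley of P of minimal valley height (a low valley) if and only if i + j − 1 = δ(P) = n − 1 − lv(P). -/

import Mathlib

open Finset

/-- The `x`-th step (1-indexed) of a binary path `P` of length `n`;
`true` denotes an upstep `u`, `false` a downstep `d`. -/
def stp (n : ℕ) (P : Fin n → Bool) (x : ℕ) : Bool :=
  if h : 1 ≤ x ∧ x ≤ n then P ⟨x - 1, by omega⟩ else true

/-- The height of the `x`-th lattice point of the path (the partial sum of `±1`'s). -/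
def ht (n : ℕ) (P : Fin n → Bool) (x : ℕ) : ℤ :=
  ∑ j ∈ Finset.Icc 1 x, (if stp n P j then (1 : ℤ) else -1)

/-- The order on binary paths: `P ≤ Q` iff every height of `P` is at most that of `Q`. -/
def pLE (n : ℕ) (P Q : Fin n → Bool) : Prop := ∀ x ≤ n, ht n P x ≤ ht n Q x

def pLT (n : ℕ) (P Q : Fin n → Bool) : Prop := pLE n P Q ∧ ¬ pLE n Q P

/-- `Q` covers `P` in the lattice of binary paths. -/
def covers (n : ℕ) (P Q : Fin n → Bool) : Prop :=
  pLT n P Q ∧ ∀ R, pLT n P R → ¬ pLT n R Q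

/-- The `x`-th point of `P` is a valley: last point of a maximal run of downsteps. -/
def valley (n : ℕ) (P : Fin n → Bool) (x : ℕ) : Prop :=
  1 ≤ x ∧ x ≤ n ∧ stp n P x = false ∧ (x = n ∨ stp n P (x + 1) = true)

/-- The maximum path `1_n = u^n`. -/
def pTop (n : ℕ) : Fin n → Bool := fun _ => true

/-- The minimum path `0_n = d^n`. -/
def pBot (n : ℕ) : Fin n → Bool := fun _ => false

/-- The set of positions of downsteps of `P`. -/
def dsteps (n : ℕ) (P : Fin n → Bool) : Finset (Fin n) :=
  Finset.univ.filter fun j => P j = false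

/-- `m(P) = |P|_d`, the number of downsteps of `P`. -/
def nd (n : ℕ) (P : Fin n → Bool) : ℕ := (dsteps n P).card

/-- The 0-indexed position of the `(i+1)`-st downstep of `P`. -/
def dpos (n : ℕ) (P : Fin n → Bool) (i : Fin (nd n P)) : ℕ :=
  (((dsteps n P).orderIsoOfFin rfl i : {x // x ∈ dsteps n P}) : Fin n)

/-- The part `λ_{i+1} = n − (i+1) − k_{i+1} + 1` of the strict partition `λ(P)`;
since `k_{i+1} = dpos i − i`, this equals `n − dpos i`. -/
def lam (n : ℕ) (P : Fin n → Bool) (i : Fin (nd n P)) : ℕ := n - dpos n P i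

/-- The shifted diagram `F(P)` of shape `λ(P)`, as the set of (1-indexed) cells
`(i, j)` with `i ∈ [m]`, `i ≤ j ≤ λ_i + i − 1`. -/
def F (n : ℕ) (P : Fin n → Bool) : Set (ℕ × ℕ) :=
  {c | ∃ i : Fin (nd n P),
    c.1 = (i : ℕ) + 1 ∧ (i : ℕ) + 1 ≤ c.2 ∧ c.2 ≤ lam n P i + (i : ℕ)}

/-- `lv P`: the minimal height among all valleys of `P`. -/
noncomputable def lv (n : ℕ) (P : Fin n → Bool) : ℤ :=
  sInf {h : ℤ | ∃ x, valley n P x ∧ ht n P x = h}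

lemma ht_succ (n : ℕ) (P : Fin n → Bool) (x : ℕ) :
    ht n P (x + 1) = ht n P x + (if stp n P (x+1) then (1:ℤ) else -1) := by
  unfold ht
  rw [← Finset.sum_Icc_succ_top (by omega)]

lemma valley_of_min (n : ℕ) (P : Fin n → Bool) (hd : stp n P 1 = false)
    (x : ℕ) (hx1 : 1 ≤ x) (hxn : x ≤ n)
    (hmin : ∀ y, 1 ≤ y → y ≤ n → ht n P x ≤ ht n P y) : valley n P x := by
  refine ⟨hx1, hxn, ?_, ?_⟩
  · by_contra h
    have hst : stp n P x = true := by simpa using h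
    rcases Nat.lt_or_ge x 2 with h2 | h2
    · interval_cases x
      rw [hd] at hst; exact Bool.false_ne_true hst
    · have heq := ht_succ n P (x-1)
      have hx' : x - 1 + 1 = x := by omega
      rw [hx', hst, if_pos rfl] at heq
      have h1 := hmin (x-1) (by omega) (by omega)
      omega
  · by_contra h
    push_neg at h
    obtain ⟨hne, hst⟩ := h
    have hst' : stp n P (x+1) = false := by simpa using hst
    have heq := ht_succ n P x
    rw [hst'] at heq
    simp at heq
    have h1 := hmin (x+1) (by omega) (by omega)
    omega

lemma lv_spec (n : ℕ) (P : Fin n → Bool) (hn : 0 < n) (hd : stp n P 1 = false) :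
    (∃ x, valley n P x ∧ ht n P x = lv n P) ∧
    ∀ y, 1 ≤ y → y ≤ n → lv n P ≤ ht n P y := by
  have hne : (Finset.Icc 1 n).Nonempty := ⟨1, Finset.mem_Icc.mpr ⟨le_refl 1, hn⟩⟩
  set M := (Finset.Icc 1 n).inf' hne (ht n P) with hM
  obtain ⟨x, hx, hxe⟩ := Finset.exists_mem_eq_inf' hne (ht n P)
  rw [Finset.mem_Icc] at hx
  have hmin : ∀ y, 1 ≤ y → y ≤ n → ht n P x ≤ ht n P y := by
    intro y hy1 hy2
    rw [← hxe]
    exact Finset.inf'_le _ (Finset.mem_Icc.mpr ⟨hy1, hy2⟩)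
  have hv : valley n P x := valley_of_min n P hd x hx.1 hx.2 hmin
  have hlb : ∀ h ∈ {h : ℤ | ∃ x, valley n P x ∧ ht n P x = h}, M ≤ h := by
    rintro h ⟨y, hy, rfl⟩
    exact Finset.inf'_le _ (Finset.mem_Icc.mpr ⟨hy.1, hy.2.1⟩)
  have hmem : M ∈ {h : ℤ | ∃ x, valley n P x ∧ ht n P x = h} := ⟨x, hv, hxe.symm⟩
  have hlv : lv n P = M := le_antisymm
    (csInf_le ⟨M, hlb⟩ hmem)
    (le_csInf ⟨M, hmem⟩ hlb)
  refine ⟨⟨x, hv, by rw [hlv, hM]; exact hxe.symm⟩, ?_⟩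
  intro y hy1 hy2
  rw [hlv]
  exact Finset.inf'_le _ (Finset.mem_Icc.mpr ⟨hy1, hy2⟩)

lemma ht_eq_card (n : ℕ) (P : Fin n → Bool) (x : ℕ) :
    ht n P x = (x : ℤ) -
      2 * ((Finset.Icc 1 x).filter (fun j => stp n P j = false)).card := by
  induction x with
  | zero => simp [ht]
  | succ x ih =>
    have h1 : Finset.Icc 1 (x+1) = insert (x+1) (Finset.Icc 1 x) := by
      ext y
      simp only [Finset.mem_Icc, Finset.mem_insert]
      omega
    have h2 : (x+1) ∉ Finset.Icc 1 x := by simp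
    rw [ht_succ, ih, h1, Finset.filter_insert]
    by_cases hs : stp n P (x+1) = false
    · rw [if_pos hs, if_neg (by simp [hs])]
      rw [Finset.card_insert_of_notMem (fun hm => h2 (Finset.mem_filter.mp hm).1)]
      push_cast; ring
    · rw [if_neg hs, if_pos (by simpa using hs)]
      push_cast; ring

lemma dpos_lt (n : ℕ) (P : Fin n → Bool) (i : Fin (nd n P)) : dpos n P i < n :=
  (((dsteps n P).orderIsoOfFin rfl i : {x // x ∈ dsteps n P}) : Fin n).isLt

lemma card_down_ge (n : ℕ) (P : Fin n → Bool) (i : Fin (nd n P)) (x : ℕ)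
    (hx : dpos n P i + 1 ≤ x) :
    (i : ℕ) + 1 ≤ ((Finset.Icc 1 x).filter (fun j => stp n P j = false)).card := by
  have hcard : ((i:ℕ)+1) = (Finset.range ((i:ℕ)+1)).card := by simp
  rw [hcard]
  apply Finset.card_le_card_of_injOn
    (fun k => if h : k < nd n P then dpos n P ⟨k, h⟩ + 1 else 0)
  · intro k hk
    rw [Finset.mem_coe, Finset.mem_range] at hk
    have hk' : k < nd n P := lt_of_le_of_lt (by omega) i.isLt
    beta_reduce
    rw [dif_pos hk']
    have hle : dpos n P ⟨k, hk'⟩ ≤ dpos n P i := by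
      have hmono := (((dsteps n P).orderIsoOfFin rfl).monotone
        (show (⟨k, hk'⟩ : Fin (nd n P)) ≤ i from by
          rwa [Fin.le_def, Nat.lt_succ_iff] at *))
      exact hmono
    have hlt := dpos_lt n P ⟨k, hk'⟩
    rw [Finset.mem_coe, Finset.mem_filter, Finset.mem_Icc]
    refine ⟨⟨by omega, by omega⟩, ?_⟩
    unfold stp
    rw [dif_pos ⟨by omega, by omega⟩]
    have hmem : (((dsteps n P).orderIsoOfFin rfl ⟨k, hk'⟩ :
        {x // x ∈ dsteps n P}) : Fin n) ∈ dsteps n P :=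
      ((dsteps n P).orderIsoOfFin rfl ⟨k, hk'⟩).2
    simp only [dsteps, Finset.mem_filter] at hmem
    have hPf := hmem.2
    have : (⟨dpos n P ⟨k, hk'⟩ + 1 - 1, by omega⟩ : Fin n) =
        (((dsteps n P).orderIsoOfFin rfl ⟨k, hk'⟩ :
        {x // x ∈ dsteps n P}) : Fin n) := by
      apply Fin.ext
      simp [dpos]
      rfl
    rw [this]; exact hPf
  · intro a ha b hb hab
    rw [Finset.mem_coe, Finset.mem_range] at ha hb
    have ha' : a < nd n P := lt_of_le_of_lt (by omega) i.isLt
    have hb' : b < nd n P := lt_of_le_of_lt (by omega) i.isLt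
    have hab' : dpos n P ⟨a, ha'⟩ + 1 = dpos n P ⟨b, hb'⟩ + 1 := by
      simpa [dif_pos ha', dif_pos hb'] using hab
    have hd : dpos n P ⟨a, ha'⟩ = dpos n P ⟨b, hb'⟩ := by omega
    have : (⟨a, ha'⟩ : Fin (nd n P)) = ⟨b, hb'⟩ := by
      apply ((dsteps n P).orderIsoOfFin rfl).injective
      apply Subtype.ext
      apply Fin.ext
      exact hd
    exact Fin.mk.inj_iff.mp this

/-- For a cell `(i,j)` of `F(P)`, the corresponding lattice point `(n+i−j, n−i−j)`
is a low valley of `P` iff `i + j − 1 = δ(P) = n − 1 − lv(P)`. -/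
theorem stmt12 (n : ℕ) (P : Fin n → Bool) (hn : 0 < n) (hd : stp n P 1 = false)
    (hP : P ≠ pTop n) (c : ℕ × ℕ) (hc : c ∈ F n P) :
    (ht n P (n + c.1 - c.2) = (n : ℤ) - c.1 - c.2 ∧
      valley n P (n + c.1 - c.2) ∧ ht n P (n + c.1 - c.2) = lv n P) ↔
    (c.1 : ℤ) + c.2 - 1 = (n : ℤ) - 1 - lv n P := by
  obtain ⟨i₀, h1, h2, h3⟩ := hc
  have hp : dpos n P i₀ < n := dpos_lt n P i₀
  have hb_le : c.2 ≤ n - dpos n P i₀ + i₀ := by simpa [lam] using h3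
  have hpi : (i₀ : ℕ) ≤ dpos n P i₀ := by
    have h := card_down_ge n P i₀ (dpos n P i₀ + 1) le_rfl
    have hcle := Finset.card_filter_le (Finset.Icc 1 (dpos n P i₀ + 1))
      (fun j => stp n P j = false)
    rw [Nat.card_Icc] at hcle
    omega
  set x := n + c.1 - c.2 with hxdef
  have hxge : dpos n P i₀ + 1 ≤ x := by omega
  have hx1 : 1 ≤ x := by omega
  have hxn : x ≤ n := by omega
  have hub : ht n P x ≤ (n : ℤ) - c.1 - c.2 := by
    rw [ht_eq_card]
    have hcard := card_down_ge n P i₀ x hxge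
    omega
  obtain ⟨⟨v, hv, hve⟩, hlow⟩ := lv_spec n P hn hd
  have hlb : lv n P ≤ ht n P x := hlow x hx1 hxn
  constructor
  · rintro ⟨he, _, hm⟩
    rw [he] at hm
    linarith
  · intro hL
    have hlv : lv n P = (n : ℤ) - c.1 - c.2 := by linarith
    have he : ht n P x = (n : ℤ) - c.1 - c.2 := le_antisymm hub (hlv ▸ hlb)
    refine ⟨he, ?_, by rw [he, hlv]⟩
    refine valley_of_min n P hd x hx1 hxn (fun y hy1 hy2 => ?_)
    have := hlow y hy1 hy2
    omega
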